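/- Assume (p₀), (V_α), (G_β). If A ⊂ G is infinite and connected, then for any x₀ ∈ G, cap(A ∩ B(x₀,L)) → ∞ as L → ∞. Consequently, for any u > 0, the random interlacement set I^u intersects A almost surely. -/

import Mathlib

open scoped ENNReal

open Classical in
noncomputable def nstep {V : Type*} (p : V → V → ℝ) : ℕ → V → V → ℝ
  | 0, x, y => if x = y then 1 else 0
  | n + 1, x, y => ∑' z, nstep p n x z * p z y

noncomputable def green {V : Type*} (p : V → V → ℝ) (lam : V → ℝ) (x y : V) : ℝ :=
  (1 / lam y) * ∑' n, nstep p n x y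

open Classical in
noncomputable def killedKernel {V : Type*} (p : V → V → ℝ) (U : Set V) (x y : V) : ℝ :=
  if x ∈ U ∧ y ∈ U then p x y else 0

noncomputable def killedGreen {V : Type*} (p : V → V → ℝ) (lam : V → ℝ) (U : Set V) (x y : V) : ℝ :=
  (1 / lam y) * ∑' n, nstep (killedKernel p U) n x y

open Classical in
noncomputable def hitProb {V : Type*} (p : V → V → ℝ) (A : Set V) (x : V) : ℝ :=
  ∑' n : ℕ, ∑' y : V, if y ∈ A then nstep (fun a b => if a ∈ A then 0 else p a b) n x y else 0

open Classical in
noncomputable def eqMeasure {V : Type*} (p : V → V → ℝ) (lam : V → ℝ) (A : Set V) (x : V) : ℝ :=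
  if x ∈ A then lam x * (1 - ∑' y, p x y * hitProb p A y) else 0

noncomputable def capaE {V : Type*} (p : V → V → ℝ) (lam : V → ℝ) (A : Set V) : ℝ≥0∞ :=
  ∑' x : V, Set.indicator A (fun v => ENNReal.ofReal (eqMeasure p lam A v)) x

namespace RIaux

open scoped Classical

variable {V : Type*}

lemma nstep_zero (k : V → V → ℝ) (x y : V) :
    nstep k 0 x y = if x = y then 1 else 0 := rfl

lemma nstep_succ (k : V → V → ℝ) (n : ℕ) (x y : V) :
    nstep k (n+1) x y = ∑' z, nstep k n x z * k z y := rfl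

lemma nstep_nonneg {k : V → V → ℝ} (hk : ∀ a b, 0 ≤ k a b) :
    ∀ n x y, 0 ≤ nstep k n x y := by
  intro n
  induction n with
  | zero => intro x y; rw [nstep_zero]; split <;> norm_num
  | succ n ih =>
    intro x y
    rw [nstep_succ]
    exact tsum_nonneg fun z => mul_nonneg (ih x z) (hk z y)

lemma nstep_supp {k : V → V → ℝ} (hs : ∀ a, (Function.support (k a)).Finite) :
    ∀ n x, (Function.support (nstep k n x)).Finite := by
  intro n
  induction n with
  | zero =>
    intro x
    refine (Set.finite_singleton x).subset ?_
    intro y hy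
    simp only [Function.mem_support, nstep_zero] at hy
    by_contra h
    simp only [Set.mem_singleton_iff] at h
    exact hy (if_neg (fun e => h e.symm))
  | succ n ih =>
    intro x
    refine ((ih x).biUnion (fun z _ => hs z)).subset ?_
    intro y hy
    simp only [Function.mem_support, nstep_succ] at hy
    have : ∃ z, nstep k n x z * k z y ≠ 0 := by
      by_contra h
      push_neg at h
      exact hy (by simp [h])
    obtain ⟨z, hz⟩ := this
    have h1 : nstep k n x z ≠ 0 := fun h => hz (by simp [h])
    have h2 : k z y ≠ 0 := fun h => hz (by simp [h])
    exact Set.mem_biUnion h1 h2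

lemma summable_nstep_mul {k : V → V → ℝ} (hs : ∀ a, (Function.support (k a)).Finite)
    (n : ℕ) (x : V) (c : V → ℝ) : Summable (fun z => nstep k n x z * c z) := by
  refine summable_of_ne_finset_zero (s := (nstep_supp hs n x).toFinset) ?_
  intro z hz
  have : nstep k n x z = 0 := by
    by_contra h
    exact hz ((nstep_supp hs n x).mem_toFinset.2 h)
  simp [this]

lemma summable_mul_nstep {k : V → V → ℝ} (hs : ∀ a, (Function.support (k a)).Finite)
    (x : V) (c : V → ℝ) (f : V → ℝ) : Summable (fun z => k x z * f z) := by
  refine summable_of_ne_finset_zero (s := (hs x).toFinset) ?_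
  intro z hz
  have : k x z = 0 := by
    by_contra h
    exact hz ((hs x).mem_toFinset.2 h)
  simp [this]

lemma nstep_succ_left {k : V → V → ℝ} (hs : ∀ a, (Function.support (k a)).Finite) :
    ∀ (n : ℕ) (x y : V), nstep k (n+1) x y = ∑' z, k x z * nstep k n z y := by
  intro n
  induction n with
  | zero =>
    intro x y
    rw [nstep_succ]
    rw [tsum_eq_single x (fun z hz => by rw [nstep_zero, if_neg (fun e => hz e.symm), zero_mul])]
    rw [tsum_eq_single y (fun z hz => by rw [nstep_zero, if_neg hz, mul_zero])]
    rw [nstep_zero, if_pos rfl, nstep_zero, if_pos rfl, one_mul, mul_one]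
  | succ n ih =>
    intro x y
    set T : Finset V := (hs x).toFinset with hT
    set U : Finset V := (nstep_supp hs (n+1) x).toFinset ∪
      T.biUnion (fun w => (nstep_supp hs n w).toFinset) with hU
    have hTmem : ∀ w, w ∉ T → k x w = 0 := by
      intro w hw; by_contra h; exact hw ((hs x).mem_toFinset.2 h)
    have hU1 : ∀ z, z ∉ U → nstep k (n+1) x z = 0 := by
      intro z hz; by_contra h
      exact hz (Finset.mem_union_left _ ((nstep_supp hs (n+1) x).mem_toFinset.2 h))
    have hU2 : ∀ w ∈ T, ∀ z, z ∉ U → nstep k n w z = 0 := by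
      intro w hw z hz; by_contra h
      exact hz (Finset.mem_union_right _
        (Finset.mem_biUnion.2 ⟨w, hw, (nstep_supp hs n w).mem_toFinset.2 h⟩))
    calc nstep k (n+2) x y = ∑' z, nstep k (n+1) x z * k z y := nstep_succ k (n+1) x y
      _ = ∑ z ∈ U, nstep k (n+1) x z * k z y := by
          refine tsum_eq_sum ?_
          intro z hz; rw [hU1 z hz, zero_mul]
      _ = ∑ z ∈ U, (∑ w ∈ T, k x w * nstep k n w z) * k z y := by
          refine Finset.sum_congr rfl fun z _ => ?_
          rw [ih x z, tsum_eq_sum (fun w hw => by rw [hTmem w hw, zero_mul])]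
      _ = ∑ z ∈ U, ∑ w ∈ T, k x w * nstep k n w z * k z y := by
          refine Finset.sum_congr rfl fun z _ => ?_
          rw [Finset.sum_mul]
      _ = ∑ w ∈ T, ∑ z ∈ U, k x w * nstep k n w z * k z y := Finset.sum_comm
      _ = ∑ w ∈ T, k x w * ∑ z ∈ U, nstep k n w z * k z y := by
          refine Finset.sum_congr rfl fun w _ => ?_
          rw [Finset.mul_sum]
          exact Finset.sum_congr rfl fun z _ => by ring
      _ = ∑ w ∈ T, k x w * nstep k (n+1) w y := by
          refine Finset.sum_congr rfl fun w hw => ?_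
          congr 1
          rw [nstep_succ]
          refine (tsum_eq_sum ?_).symm
          intro z hz; rw [hU2 w hw z hz, zero_mul]
      _ = ∑' w, k x w * nstep k (n+1) w y := by
          refine (tsum_eq_sum ?_).symm
          intro w hw; rw [hTmem w hw, zero_mul]

lemma nstep_mono {k k' : V → V → ℝ} (hk0 : ∀ a b, 0 ≤ k a b)
    (hk'0 : ∀ a b, 0 ≤ k' a b)
    (hle : ∀ a b, k a b ≤ k' a b)
    (hs : ∀ a, (Function.support (k a)).Finite)
    (hs' : ∀ a, (Function.support (k' a)).Finite) :
    ∀ n x y, nstep k n x y ≤ nstep k' n x y := by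
  intro n
  induction n with
  | zero => intro x y; rw [nstep_zero, nstep_zero]
  | succ n ih =>
    intro x y
    rw [nstep_succ, nstep_succ]
    refine Summable.tsum_le_tsum ?_ (summable_nstep_mul hs n x _) (summable_nstep_mul hs' n x _)
    intro z
    exact mul_le_mul (ih x z) (hle z y) (hk0 z y) (nstep_nonneg hk'0 n x z)

open Classical in
noncomputable def qk (p : V → V → ℝ) (S : Set V) : V → V → ℝ :=
  fun a b => if a ∈ S then 0 else p a b

lemma hitProb_eq (p : V → V → ℝ) (S : Set V) (x : V) :
    hitProb p S x = ∑' n : ℕ, ∑' y : V, if y ∈ S then nstep (qk p S) n x y else 0 := rfl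

section Pstuff

variable {p : V → V → ℝ}

lemma qk_nonneg (hp0 : ∀ a b, 0 ≤ p a b) (S : Set V) : ∀ a b, 0 ≤ qk p S a b := by
  intro a b; unfold qk; split
  · exact le_refl 0
  · exact hp0 a b

lemma qk_supp (hps : ∀ a, (Function.support (p a)).Finite) (S : Set V) :
    ∀ a, (Function.support (qk p S a)).Finite := by
  intro a
  refine (hps a).subset ?_
  intro b hb
  simp only [Function.mem_support, qk] at hb ⊢
  intro h; exact hb (by rw [h]; split <;> rfl)

lemma qk_le (hp0 : ∀ a b, 0 ≤ p a b) (S : Set V) : ∀ a b, qk p S a b ≤ p a b := by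
  intro a b; unfold qk; split
  · exact hp0 a b
  · exact le_refl _

lemma qk_anti (hp0 : ∀ a b, 0 ≤ p a b) {S S' : Set V} (hSS : S' ⊆ S) :
    ∀ a b, qk p S a b ≤ qk p S' a b := by
  intro a b; unfold qk
  by_cases h : a ∈ S
  · rw [if_pos h]
    split
    · exact le_refl 0
    · exact hp0 a b
  · rw [if_neg h, if_neg (fun h' => h (hSS h'))]

lemma qk_kill (hps : ∀ a, (Function.support (p a)).Finite) {S : Set V} {x : V}
    (hx : x ∈ S) (m : ℕ) (z : V) :
    nstep (qk p S) (m+1) x z = 0 := by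
  rw [nstep_succ_left (qk_supp hps S)]
  have h : ∀ w, qk p S x w * nstep (qk p S) m w z = 0 := by
    intro w; unfold qk; rw [if_pos hx, zero_mul]
  exact (tsum_congr h).trans tsum_zero

lemma first_passage (hps : ∀ a, (Function.support (p a)).Finite) (z : V) :
    ∀ (n : ℕ) (y : V), nstep p n y z =
      ∑ m ∈ Finset.range (n+1), nstep (qk p {z}) m y z * nstep p (n - m) z z := by
  intro n
  induction n with
  | zero =>
    intro y
    simp only [zero_add, Finset.range_one, Finset.sum_singleton, Nat.sub_zero]
    rw [nstep_zero, nstep_zero, nstep_zero]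
    by_cases h : y = z
    · subst h; simp
    · simp [h]
  | succ n ih =>
    intro y
    by_cases hyz : y = z
    · subst hyz
      rw [Finset.sum_eq_single_of_mem 0 (Finset.mem_range.2 (Nat.succ_pos _))]
      · rw [nstep_zero, if_pos rfl, one_mul, Nat.sub_zero]
      · intro m hm hm0
        obtain ⟨m', rfl⟩ := Nat.exists_eq_succ_of_ne_zero hm0
        rw [qk_kill hps (Set.mem_singleton y) m' y, zero_mul]
    · calc nstep p (n+1) y z = ∑' w, p y w * nstep p n w z := nstep_succ_left hps n y z
        _ = ∑ w ∈ (hps y).toFinset, p y w * nstep p n w z := by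
            refine tsum_eq_sum ?_
            intro w hw
            have : p y w = 0 := by
              by_contra h; exact hw ((hps y).mem_toFinset.2 h)
            rw [this, zero_mul]
        _ = ∑ w ∈ (hps y).toFinset, ∑ m ∈ Finset.range (n+1),
              p y w * (nstep (qk p {z}) m w z * nstep p (n - m) z z) := by
            refine Finset.sum_congr rfl fun w _ => ?_
            rw [ih w, Finset.mul_sum]
        _ = ∑ m ∈ Finset.range (n+1),
              (∑ w ∈ (hps y).toFinset, p y w * nstep (qk p {z}) m w z) * nstep p (n - m) z z := by
            rw [Finset.sum_comm]
            refine Finset.sum_congr rfl fun m _ => ?_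
            rw [Finset.sum_mul]
            exact Finset.sum_congr rfl fun w _ => by ring
        _ = ∑ m ∈ Finset.range (n+1), nstep (qk p {z}) (m+1) y z * nstep p (n - m) z z := by
            refine Finset.sum_congr rfl fun m _ => ?_
            congr 1
            rw [nstep_succ_left (qk_supp hps {z})]
            rw [tsum_eq_sum (s := (hps y).toFinset) ?_]
            · refine Finset.sum_congr rfl fun w _ => ?_
              congr 1
              unfold qk
              rw [if_neg (by simpa using hyz)]
            · intro w hw
              have h1 : p y w = 0 := by
                by_contra h; exact hw ((hps y).mem_toFinset.2 h)
              have h2 : qk p {z} y w = 0 := by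
                unfold qk; rw [h1]; split <;> rfl
              rw [h2, zero_mul]
        _ = ∑ m ∈ Finset.range (n+1+1), nstep (qk p {z}) m y z * nstep p (n+1 - m) z z := by
            rw [Finset.sum_range_succ'
              (fun m => nstep (qk p {z}) m y z * nstep p (n+1 - m) z z) (n+1)]
            rw [nstep_zero, if_neg hyz, zero_mul, add_zero]
            exact Finset.sum_congr rfl fun m _ => by rw [Nat.succ_sub_succ]

lemma F_le (hp0 : ∀ a b, 0 ≤ p a b) (hps : ∀ a, (Function.support (p a)).Finite)
    (z y : V) (m : ℕ) :
    nstep (qk p {z}) m y z ≤ nstep p m y z := by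
  have h := first_passage hps z m y
  have hm : m ∈ Finset.range (m+1) := Finset.mem_range.2 (Nat.lt_succ_self m)
  calc nstep (qk p {z}) m y z
      = nstep (qk p {z}) m y z * nstep p (m - m) z z := by
        rw [Nat.sub_self, nstep_zero, if_pos rfl, mul_one]
    _ ≤ ∑ j ∈ Finset.range (m+1), nstep (qk p {z}) j y z * nstep p (m - j) z z := by
        refine Finset.single_le_sum (f := fun j => nstep (qk p {z}) j y z * nstep p (m - j) z z)
          (fun j _ => mul_nonneg (nstep_nonneg (qk_nonneg hp0 {z}) j y z)
            (nstep_nonneg hp0 _ z z)) hm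
    _ = nstep p m y z := (h).symm

lemma summable_F (hp0 : ∀ a b, 0 ≤ p a b) (hps : ∀ a, (Function.support (p a)).Finite)
    (htrans : ∀ x y, Summable (fun n => nstep p n x y)) (z y : V) :
    Summable (fun m => nstep (qk p {z}) m y z) :=
  Summable.of_nonneg_of_le (fun m => nstep_nonneg (qk_nonneg hp0 {z}) m y z)
    (fun m => F_le hp0 hps z y m) (htrans y z)

lemma hitProb_singleton (z y : V) :
    hitProb p {z} y = ∑' m, nstep (qk p {z}) m y z := by
  rw [hitProb_eq]
  refine tsum_congr fun m => ?_
  rw [tsum_eq_single z ?_]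
  · rw [if_pos (Set.mem_singleton z)]
  · intro w hw
    rw [if_neg (by simpa using hw)]

lemma green_hit (hp0 : ∀ a b, 0 ≤ p a b) (hps : ∀ a, (Function.support (p a)).Finite)
    (htrans : ∀ x y, Summable (fun n => nstep p n x y)) (z y : V) :
    (∑' n, nstep p n y z) = hitProb p {z} y * (∑' n, nstep p n z z) := by
  rw [hitProb_singleton]
  have hF := summable_F hp0 hps htrans z y
  have hFn : Summable fun m => ‖nstep (qk p {z}) m y z‖ :=
    (summable_congr fun m =>
      Real.norm_of_nonneg (nstep_nonneg (qk_nonneg hp0 {z}) m y z)).2 hF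
  have hGn : Summable fun n => ‖nstep p n z z‖ :=
    (summable_congr fun n => Real.norm_of_nonneg (nstep_nonneg hp0 n z z)).2 (htrans z z)
  rw [tsum_mul_tsum_eq_tsum_sum_range_of_summable_norm hFn hGn]
  exact tsum_congr fun n => first_passage hps z n y


lemma hit_step (hp0 : ∀ a b, 0 ≤ p a b) (hps : ∀ a, (Function.support (p a)).Finite)
    (htrans : ∀ x y, Summable (fun n => nstep p n x y)) {x z : V} (hxz : x ≠ z) :
    (∑' y, p x y * hitProb p {z} y) = ∑' m, nstep (qk p {z}) (m+1) x z := by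
  have hTmem : ∀ y, y ∉ (hps x).toFinset → p x y = 0 := by
    intro y hy; by_contra h; exact hy ((hps x).mem_toFinset.2 h)
  have hstep : ∀ m, nstep (qk p {z}) (m+1) x z =
      ∑ y ∈ (hps x).toFinset, p x y * nstep (qk p {z}) m y z := by
    intro m
    rw [nstep_succ_left (qk_supp hps {z})]
    rw [tsum_eq_sum (s := (hps x).toFinset) ?_]
    · refine Finset.sum_congr rfl fun y _ => ?_
      congr 1
      unfold qk
      rw [if_neg (by simpa using hxz)]
    · intro y hy
      have h2 : qk p {z} x y = 0 := by
        unfold qk; rw [hTmem y hy]; split <;> rfl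
      rw [h2, zero_mul]
  calc (∑' y, p x y * hitProb p {z} y)
      = ∑ y ∈ (hps x).toFinset, p x y * hitProb p {z} y := by
        refine tsum_eq_sum fun y hy => ?_
        rw [hTmem y hy, zero_mul]
    _ = ∑ y ∈ (hps x).toFinset, ∑' m, p x y * nstep (qk p {z}) m y z := by
        refine Finset.sum_congr rfl fun y _ => ?_
        rw [hitProb_singleton, tsum_mul_left]
    _ = ∑' m, ∑ y ∈ (hps x).toFinset, p x y * nstep (qk p {z}) m y z := by
        refine (Summable.tsum_finsetSum ?_).symm
        intro y _
        exact (summable_F hp0 hps htrans z y).mul_left _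
    _ = ∑' m, nstep (qk p {z}) (m+1) x z := tsum_congr fun m => (hstep m).symm

lemma hit_step_le (hp0 : ∀ a b, 0 ≤ p a b) (hps : ∀ a, (Function.support (p a)).Finite)
    (htrans : ∀ x y, Summable (fun n => nstep p n x y)) {x z : V} (hxz : x ≠ z) :
    (∑' y, p x y * hitProb p {z} y) ≤ hitProb p {z} x := by
  rw [hit_step hp0 hps htrans hxz, hitProb_singleton,
    Summable.tsum_eq_zero_add (summable_F hp0 hps htrans z x)]
  exact le_add_of_nonneg_left (nstep_nonneg (qk_nonneg hp0 {z}) 0 x z)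

lemma return_identity (hp0 : ∀ a b, 0 ≤ p a b) (hps : ∀ a, (Function.support (p a)).Finite)
    (htrans : ∀ x y, Summable (fun n => nstep p n x y)) (x : V) :
    (∑' n, nstep p n x x) * (1 - ∑' y, p x y * hitProb p {x} y) = 1 := by
  set G : ℝ := ∑' n, nstep p n x x with hGdef
  set r : ℝ := ∑' y, p x y * hitProb p {x} y with hrdef
  have hTmem : ∀ y, y ∉ (hps x).toFinset → p x y = 0 := by
    intro y hy; by_contra h; exact hy ((hps x).mem_toFinset.2 h)
  have h1 : G = 1 + ∑' n, nstep p (n+1) x x := by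
    rw [hGdef, Summable.tsum_eq_zero_add (htrans x x), nstep_zero, if_pos rfl]
  have h2 : (∑' n, nstep p (n+1) x x) = r * G := by
    calc (∑' n, nstep p (n+1) x x)
        = ∑' n, ∑ y ∈ (hps x).toFinset, p x y * nstep p n y x := by
          refine tsum_congr fun n => ?_
          rw [nstep_succ_left hps]
          refine tsum_eq_sum fun y hy => by rw [hTmem y hy, zero_mul]
      _ = ∑ y ∈ (hps x).toFinset, ∑' n, p x y * nstep p n y x := by
          refine Summable.tsum_finsetSum fun y _ => (htrans y x).mul_left _
      _ = ∑ y ∈ (hps x).toFinset, p x y * (hitProb p {x} y * G) := by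
          refine Finset.sum_congr rfl fun y _ => ?_
          rw [tsum_mul_left, green_hit hp0 hps htrans x y]
      _ = (∑ y ∈ (hps x).toFinset, p x y * hitProb p {x} y) * G := by
          rw [Finset.sum_mul]
          exact Finset.sum_congr rfl fun y _ => by ring
      _ = r * G := by
          congr 1
          rw [hrdef]
          refine (tsum_eq_sum fun y hy => by rw [hTmem y hy, zero_mul]).symm
  have h3 : G = 1 + r * G := h1.trans (by rw [h2])
  have h4 : G * (1 - r) = G - r * G := by ring
  rw [h4]
  linarith [h3]

lemma hitProb_nonneg (hp0 : ∀ a b, 0 ≤ p a b) (S : Set V) (x : V) :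
    0 ≤ hitProb p S x := by
  rw [hitProb_eq]
  refine tsum_nonneg fun n => tsum_nonneg fun y => ?_
  split
  · exact nstep_nonneg (qk_nonneg hp0 S) n x y
  · exact le_refl 0

lemma hitProb_le_sum (hp0 : ∀ a b, 0 ≤ p a b) (hps : ∀ a, (Function.support (p a)).Finite)
    (htrans : ∀ x y, Summable (fun n => nstep p n x y))
    {S : Set V} (hS : S.Finite) (y : V) :
    hitProb p S y ≤ ∑ z ∈ hS.toFinset, hitProb p {z} y := by
  have ht : ∀ n : ℕ, (∑' y' : V, if y' ∈ S then nstep (qk p S) n y y' else 0) =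
      ∑ z ∈ hS.toFinset, nstep (qk p S) n y z := by
    intro n
    rw [tsum_eq_sum (s := hS.toFinset) ?_]
    · exact Finset.sum_congr rfl fun z hz => if_pos (hS.mem_toFinset.1 hz)
    · intro z hz
      rw [if_neg (fun h => hz (hS.mem_toFinset.2 h))]
  have htu : ∀ n, (∑ z ∈ hS.toFinset, nstep (qk p S) n y z) ≤
      ∑ z ∈ hS.toFinset, nstep (qk p {z}) n y z := by
    intro n
    refine Finset.sum_le_sum fun z hz => ?_
    exact nstep_mono (qk_nonneg hp0 S) (qk_nonneg hp0 {z})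
      (qk_anti hp0 (by simpa using hS.mem_toFinset.1 hz))
      (qk_supp hps S) (qk_supp hps {z}) n y z
  have hu_sum : Summable (fun n => ∑ z ∈ hS.toFinset, nstep (qk p {z}) n y z) :=
    summable_sum fun z _ => summable_F hp0 hps htrans z y
  have ht_sum : Summable (fun n => ∑ z ∈ hS.toFinset, nstep (qk p S) n y z) := by
    refine Summable.of_nonneg_of_le ?_ htu hu_sum
    exact fun n => Finset.sum_nonneg fun z _ => nstep_nonneg (qk_nonneg hp0 S) n y z
  calc hitProb p S y = ∑' n, ∑ z ∈ hS.toFinset, nstep (qk p S) n y z := by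
        rw [hitProb_eq]; exact tsum_congr ht
    _ ≤ ∑' n, ∑ z ∈ hS.toFinset, nstep (qk p {z}) n y z := Summable.tsum_le_tsum htu ht_sum hu_sum
    _ = ∑ z ∈ hS.toFinset, ∑' n, nstep (qk p {z}) n y z :=
        Summable.tsum_finsetSum fun z _ => summable_F hp0 hps htrans z y
    _ = ∑ z ∈ hS.toFinset, hitProb p {z} y :=
        Finset.sum_congr rfl fun z _ => (hitProb_singleton z y).symm


lemma green_mul (hp0 : ∀ a b, 0 ≤ p a b) (hps : ∀ a, (Function.support (p a)).Finite)
    (htrans : ∀ x y, Summable (fun n => nstep p n x y)) (lam : V → ℝ) (x z : V) :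
    green p lam x z = hitProb p {z} x * green p lam z z := by
  unfold green
  rw [green_hit hp0 hps htrans z x]
  ring

lemma eqMeasure_lower (lam : V → ℝ) (hp0 : ∀ a b, 0 ≤ p a b)
    (hps : ∀ a, (Function.support (p a)).Finite)
    (htrans : ∀ x y, Summable (fun n => nstep p n x y))
    (F : Finset V) {x : V} (hx : x ∈ F) (hlx : 0 ≤ lam x) :
    lam x * (1 - ∑' y, p x y * hitProb p {x} y) -
      lam x * (∑ z ∈ F.erase x, hitProb p {z} x)
      ≤ eqMeasure p lam (↑F) x := by
  have hxF : x ∈ (↑F : Set V) := hx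
  have hfin : (↑F : Set V).Finite := F.finite_toSet
  have htofin : hfin.toFinset = F := by ext a; simp
  have hTmem : ∀ y, y ∉ (hps x).toFinset → p x y = 0 := by
    intro y hy; by_contra h; exact hy ((hps x).mem_toFinset.2 h)
  have step1 : ∀ y, hitProb p (↑F) y ≤ ∑ z ∈ F, hitProb p {z} y := by
    intro y
    have := hitProb_le_sum hp0 hps htrans hfin y
    rwa [htofin] at this
  have skey : (∑' y, p x y * hitProb p (↑F) y) ≤
      (∑' y, p x y * hitProb p {x} y) + ∑ z ∈ F.erase x, hitProb p {z} x := by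
    calc (∑' y, p x y * hitProb p (↑F) y)
        ≤ ∑' y, p x y * ∑ z ∈ F, hitProb p {z} y := by
          refine Summable.tsum_le_tsum (fun y => mul_le_mul_of_nonneg_left (step1 y) (hp0 x y)) ?_ ?_
          · refine summable_of_ne_finset_zero (s := (hps x).toFinset) ?_
            intro y hy; rw [hTmem y hy, zero_mul]
          · refine summable_of_ne_finset_zero (s := (hps x).toFinset) ?_
            intro y hy; rw [hTmem y hy, zero_mul]
      _ = ∑ y ∈ (hps x).toFinset, p x y * ∑ z ∈ F, hitProb p {z} y := by
          refine tsum_eq_sum fun y hy => by rw [hTmem y hy, zero_mul]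
      _ = ∑ z ∈ F, ∑ y ∈ (hps x).toFinset, p x y * hitProb p {z} y := by
          rw [← Finset.sum_comm]
          exact Finset.sum_congr rfl fun y _ => Finset.mul_sum _ _ _
      _ = ∑ z ∈ F, ∑' y, p x y * hitProb p {z} y := by
          refine Finset.sum_congr rfl fun z _ => ?_
          refine (tsum_eq_sum fun y hy => by rw [hTmem y hy, zero_mul]).symm
      _ = (∑' y, p x y * hitProb p {x} y) +
            ∑ z ∈ F.erase x, ∑' y, p x y * hitProb p {z} y := by
          rw [← Finset.add_sum_erase F _ hx]
      _ ≤ (∑' y, p x y * hitProb p {x} y) + ∑ z ∈ F.erase x, hitProb p {z} x := by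
          refine add_le_add_right (Finset.sum_le_sum fun z hz => ?_) _
          exact hit_step_le hp0 hps htrans (fun e => (Finset.mem_erase.1 hz).1 e.symm)
  have : eqMeasure p lam (↑F) x = lam x * (1 - ∑' y, p x y * hitProb p (↑F) y) := by
    unfold eqMeasure
    rw [if_pos hxF]
  rw [this]
  have h5 : lam x * (1 - ((∑' y, p x y * hitProb p {x} y) + ∑ z ∈ F.erase x, hitProb p {z} x))
      ≤ lam x * (1 - ∑' y, p x y * hitProb p (↑F) y) :=
    mul_le_mul_of_nonneg_left (by linarith) hlx
  linarith [h5]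


end Pstuff

end RIaux

/-- for infinite connected A, cap(A ∩ B(x₀,L)) → ∞ as L → ∞, and consequently
the random interlacement set I^u (characterized by P(I^u ∩ K = ∅) = exp(−u·cap K)) intersects
A almost surely. -/
theorem capacity_to_infinity_and_interlacement_hits
    {V : Type*} (G : SimpleGraph V) [∀ v : V, Fintype (G.neighborSet v)] [Infinite V]
    (hconn : G.Connected)
    (w : V → V → ℝ) (lam : V → ℝ) (p : V → V → ℝ) (d : V → V → ℝ)
    (hw_symm : ∀ x y, w x y = w y x)
    (hw_nonneg : ∀ x y, 0 ≤ w x y)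
    (hw_adj : ∀ x y, 0 < w x y ↔ G.Adj x y)
    (hlam : ∀ x, lam x = ∑ y ∈ G.neighborFinset x, w x y)
    (hp : ∀ x y, p x y = w x y / lam x)
    (htrans : ∀ x y, Summable (fun n => nstep p n x y))
    (c₀ : ℝ) (hc₀ : 0 < c₀) (hp₀ : ∀ x y, G.Adj x y → c₀ ≤ p x y)
    (hd_symm : ∀ x y, d x y = d y x)
    (hd_self : ∀ x, d x x = 0)
    (hd_nonneg : ∀ x y, 0 ≤ d x y)
    (hd_tri : ∀ x y z, d x z ≤ d x y + d y z)
    (hBfin : ∀ (x : V) (L : ℝ), {y | d x y ≤ L}.Finite)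
    (α β : ℝ) (hα : 2 < α) (hβ₂ : 2 ≤ β) (hβα : β < α)
    (cV CV : ℝ) (hcV : 0 < cV)
    (hVol : ∀ (x : V) (L : ℝ), 1 ≤ L →
      cV * L ^ α ≤ ∑ y ∈ (hBfin x L).toFinset, lam y ∧
        ∑ y ∈ (hBfin x L).toFinset, lam y ≤ CV * L ^ α)
    (cg Cg : ℝ) (hcg : 0 < cg)
    (hGdiag : ∀ x : V, cg ≤ green p lam x x ∧ green p lam x x ≤ Cg)
    (hGoff : ∀ x y : V, x ≠ y →
      cg * d x y ^ (-(α - β)) ≤ green p lam x y ∧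
        green p lam x y ≤ Cg * d x y ^ (-(α - β)))
    (A : Set V) (hAinf : A.Infinite)
    (hAconn : ∀ a ∈ A, ∀ b ∈ A, ∃ wk : G.Walk a b, ∀ v ∈ wk.support, v ∈ A)
    (x₀ : V)
    (u : ℝ) (hu : 0 < u)
    {Ω : Type*} [MeasurableSpace Ω] (μ : MeasureTheory.Measure Ω)
    (hμ : MeasureTheory.IsProbabilityMeasure μ)
    (I : Ω → Set V)
    (hImeas : ∀ S : Set V, MeasurableSet {ω | I ω ∩ S = ∅})
    (hIlaw : ∀ K : Finset V, μ {ω | I ω ∩ (↑K : Set V) = ∅} =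
      ENNReal.ofReal (Real.exp (-(u * ∑ x ∈ K, eqMeasure p lam (↑K : Set V) x)))) :
    Filter.Tendsto (fun L : ℝ => capaE p lam (A ∩ {v | d x₀ v ≤ L}))
      Filter.atTop (nhds (⊤ : ℝ≥0∞)) ∧
    μ {ω | (I ω ∩ A).Nonempty} = 1 := by
  classical
  -- basic positivity facts
  have hlam0 : ∀ x, 0 ≤ lam x := fun x => by
    rw [hlam x]; exact Finset.sum_nonneg fun y _ => hw_nonneg x y
  have hp0 : ∀ a b, 0 ≤ p a b := fun a b => by
    rw [hp a b]; exact div_nonneg (hw_nonneg a b) (hlam0 a)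
  have hps : ∀ a, (Function.support (p a)).Finite := by
    intro a
    refine (G.neighborSet a).toFinite.subset ?_
    intro b hb
    simp only [Function.mem_support] at hb
    have hwne : w a b ≠ 0 := by
      intro h; apply hb; rw [hp a b, h, zero_div]
    have : 0 < w a b := lt_of_le_of_ne (hw_nonneg a b) (Ne.symm hwne)
    exact (hw_adj a b).1 this
  have hlampos : ∀ x, 0 < lam x := by
    intro x
    obtain ⟨y, hyx⟩ := exists_ne x
    obtain ⟨wk⟩ := hconn.preconnected x y
    cases wk with
    | nil => exact absurd rfl hyx
    | @cons _ b _ h q =>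
      have hb : b ∈ G.neighborFinset x := (SimpleGraph.mem_neighborFinset G x b).2 h
      have h1 : w x b ≤ lam x := by
        rw [hlam x]
        exact Finset.single_le_sum (fun z _ => hw_nonneg x z) hb
      exact lt_of_lt_of_le ((hw_adj x b).2 h) h1
  have hgreen_pos : ∀ x, 0 < green p lam x x := fun x => lt_of_lt_of_le hcg (hGdiag x).1
  have hCg : 0 < Cg := lt_of_lt_of_le (hgreen_pos x₀) (hGdiag x₀).2
  have hlamle : ∀ x, lam x ≤ CV := by
    intro x
    have h := (hVol x 1 le_rfl).2
    rw [Real.one_rpow, mul_one] at h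
    refine le_trans ?_ h
    refine Finset.single_le_sum (fun y _ => hlam0 y) ?_
    rw [Set.Finite.mem_toFinset]
    simp [hd_self x]
  have hCV : 0 < CV := lt_of_lt_of_le (hlampos x₀) (hlamle x₀)
  have hGgreen : ∀ x, (∑' n, nstep p n x x) = lam x * green p lam x x := by
    intro x
    have h : green p lam x x = (1 / lam x) * ∑' n, nstep p n x x := rfl
    rw [h, ← mul_assoc, mul_one_div, div_self (ne_of_gt (hlampos x)), one_mul]
  have hret : ∀ x, lam x * (1 - ∑' y, p x y * hitProb p {x} y) = 1 / green p lam x x := by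
    intro x
    have h1 := RIaux.return_identity hp0 hps htrans x
    rw [hGgreen x] at h1
    rw [eq_div_iff (ne_of_gt (hgreen_pos x))]
    linarith [h1]
  have hgreen_nonneg : ∀ x z, 0 ≤ green p lam x z := by
    intro x z
    have h : green p lam x z = (1 / lam z) * ∑' n, nstep p n x z := rfl
    rw [h]
    exact mul_nonneg (one_div_nonneg.2 (hlam0 z)) (tsum_nonneg fun n => RIaux.nstep_nonneg hp0 n x z)
  have hhitb : ∀ x z : V, x ≠ z → hitProb p {z} x ≤ (Cg / cg) * d x z ^ (-(α - β)) := by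
    intro x z hxz
    have hgm := RIaux.green_mul hp0 hps htrans lam x z
    have hgz := hgreen_pos z
    have h2 : hitProb p {z} x = green p lam x z / green p lam z z := by
      rw [hgm]; field_simp
    rw [h2]
    have hup := (hGoff x z hxz).2
    have hcgz := (hGdiag z).1
    calc green p lam x z / green p lam z z ≤ green p lam x z / cg := by
          apply div_le_div_of_nonneg_left (hgreen_nonneg x z) hcg hcgz
      _ ≤ (Cg * d x z ^ (-(α - β))) / cg := by
          exact (div_le_div_iff_of_pos_right hcg).2 hup
      _ = (Cg / cg) * d x z ^ (-(α - β)) := by ring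
  -- capacity monotonicity from the interlacement law
  have capR_mono : ∀ K K' : Finset V, K ⊆ K' →
      (∑ x ∈ K, eqMeasure p lam (↑K) x) ≤ ∑ x ∈ K', eqMeasure p lam (↑K') x := by
    intro K K' hKK
    have hsub : {ω | I ω ∩ (↑K' : Set V) = ∅} ⊆ {ω | I ω ∩ (↑K : Set V) = ∅} := by
      intro ω hω
      simp only [Set.mem_setOf_eq] at hω ⊢
      have h1 : I ω ∩ (↑K : Set V) ⊆ I ω ∩ (↑K' : Set V) :=
        Set.inter_subset_inter_right _ (by exact_mod_cast hKK)
      rw [hω] at h1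
      exact Set.subset_empty_iff.1 h1
    have hm := MeasureTheory.measure_mono (μ := μ) hsub
    rw [hIlaw K, hIlaw K'] at hm
    have h2 := (ENNReal.ofReal_le_ofReal_iff (Real.exp_nonneg _)).1 hm
    have h3 := Real.exp_le_exp.1 h2
    have h4 : u * (∑ x ∈ K, eqMeasure p lam (↑K) x) ≤
        u * ∑ x ∈ K', eqMeasure p lam (↑K') x := by linarith
    exact le_of_mul_le_mul_left h4 hu
  -- existence of well-separated subsets of A
  have sep : ∀ (R : ℝ), 0 ≤ R → ∀ N : ℕ, ∃ F : Finset V, ↑F ⊆ A ∧ F.card = N ∧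
      ∀ x ∈ F, ∀ y ∈ F, x ≠ y → R ≤ d x y := by
    intro R hR N
    induction N with
    | zero => exact ⟨∅, by simp, by simp, by simp⟩
    | succ N ih =>
      obtain ⟨F, hFA, hFc, hFsep⟩ := ih
      have hfin : (⋃ b ∈ (F : Set V), {y | d b y ≤ R}).Finite :=
        Set.Finite.biUnion F.finite_toSet (fun b _ => hBfin b R)
      obtain ⟨a, ha⟩ := (hAinf.diff hfin).nonempty
      have haA : a ∈ A := ha.1
      have hanot : ∀ b ∈ F, ¬ d b a ≤ R := by
        intro b hb h
        exact ha.2 (Set.mem_biUnion (Finset.mem_coe.2 hb) h)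
      have haF : a ∉ F := fun h => hanot a h (by rw [hd_self]; exact hR)
      refine ⟨insert a F, ?_, ?_, ?_⟩
      · intro v hv
        rcases Finset.mem_insert.1 (Finset.mem_coe.1 hv) with rfl | h
        · exact haA
        · exact hFA (Finset.mem_coe.2 h)
      · rw [Finset.card_insert_of_notMem haF, hFc]
      · intro x hx y hy hxy
        rcases Finset.mem_insert.1 hx with rfl | hx'
        · rcases Finset.mem_insert.1 hy with rfl | hy'
          · exact absurd rfl hxy
          · have h1 := hanot y hy'
            rw [hd_symm y x] at h1
            exact le_of_lt (lt_of_not_ge h1)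
        · rcases Finset.mem_insert.1 hy with rfl | hy'
          · exact le_of_lt (lt_of_not_ge (hanot x hx'))
          · exact hFsep x hx' y hy' hxy
  have hνpos : (0:ℝ) < α - β := by linarith
  -- the key lower bound on capacity of finite subsets of A
  have LB : ∀ M : ℝ, ∃ F : Finset V, ↑F ⊆ A ∧ M ≤ ∑ x ∈ F, eqMeasure p lam (↑F) x := by
    intro M
    obtain ⟨N, hN⟩ := exists_nat_ge (2 * Cg * M)
    obtain ⟨R, hR2, hR1⟩ : ∃ R : ℝ,
        CV * ((N:ℝ) * ((Cg/cg) * R ^ (-(α - β)))) ≤ 1/(2*Cg) ∧ 1 ≤ R := by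
      have htend := tendsto_rpow_neg_atTop hνpos
      have h2 : Filter.Tendsto (fun R : ℝ => CV * ((N:ℝ) * ((Cg/cg) * R ^ (-(α - β)))))
          Filter.atTop (nhds (CV * ((N:ℝ) * ((Cg/cg) * 0)))) :=
        tendsto_const_nhds.mul (tendsto_const_nhds.mul (tendsto_const_nhds.mul htend))
      rw [mul_zero, mul_zero, mul_zero] at h2
      have hpos : (0:ℝ) < 1/(2*Cg) := by positivity
      have h4 := h2.eventually_le_const hpos
      exact (h4.and (Filter.eventually_ge_atTop 1)).exists
    obtain ⟨F, hFA, hFcard, hFsep⟩ := sep R (le_trans zero_le_one hR1) N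
    refine ⟨F, hFA, ?_⟩
    have hhalf : 1/Cg - 1/(2*Cg) = 1/(2*Cg) := by field_simp; ring
    have hper : ∀ x ∈ F, 1/(2*Cg) ≤ eqMeasure p lam (↑F) x := by
      intro x hxF
      have h1 := RIaux.eqMeasure_lower lam hp0 hps htrans F hxF (hlam0 x)
      have hSig : (∑ z ∈ F.erase x, hitProb p {z} x) ≤ (N:ℝ) * ((Cg/cg) * R ^ (-(α - β))) := by
        have heach : ∀ z ∈ F.erase x, hitProb p {z} x ≤ (Cg/cg) * R ^ (-(α - β)) := by
          intro z hz
          obtain ⟨hzx, hzF⟩ := Finset.mem_erase.1 hz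
          have hxz : x ≠ z := fun e => hzx e.symm
          have hdR : R ≤ d x z := hFsep x hxF z hzF hxz
          have hRpos : (0:ℝ) < R := lt_of_lt_of_le zero_lt_one hR1
          have hdpos : 0 < d x z := lt_of_lt_of_le hRpos hdR
          have hmono : d x z ^ (-(α - β)) ≤ R ^ (-(α - β)) := by
            rw [Real.rpow_neg (le_of_lt hdpos), Real.rpow_neg (le_of_lt hRpos)]
            refine inv_anti₀ (Real.rpow_pos_of_pos hRpos _) ?_
            exact Real.rpow_le_rpow (le_of_lt hRpos) hdR (le_of_lt hνpos)
          calc hitProb p {z} x ≤ (Cg/cg) * d x z ^ (-(α - β)) := hhitb x z hxz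
            _ ≤ (Cg/cg) * R ^ (-(α - β)) := mul_le_mul_of_nonneg_left hmono (by positivity)
        calc (∑ z ∈ F.erase x, hitProb p {z} x)
            ≤ (F.erase x).card • ((Cg/cg) * R ^ (-(α - β))) :=
              Finset.sum_le_card_nsmul _ _ _ heach
          _ = ((F.erase x).card : ℝ) * ((Cg/cg) * R ^ (-(α - β))) := nsmul_eq_mul _ _
          _ ≤ (N:ℝ) * ((Cg/cg) * R ^ (-(α - β))) := by
              refine mul_le_mul_of_nonneg_right ?_ ?_
              · have := Finset.card_erase_le (s := F) (a := x)
                rw [hFcard] at this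
                exact_mod_cast this
              · have hRpos : (0:ℝ) < R := lt_of_lt_of_le zero_lt_one hR1
                positivity
      have hr1 : 1/Cg ≤ 1 / green p lam x x :=
        one_div_le_one_div_of_le (hgreen_pos x) (hGdiag x).2
      have hSig0 : 0 ≤ ∑ z ∈ F.erase x, hitProb p {z} x :=
        Finset.sum_nonneg fun z _ => RIaux.hitProb_nonneg hp0 _ x
      have hlamSig : lam x * (∑ z ∈ F.erase x, hitProb p {z} x) ≤
          CV * ((N:ℝ) * ((Cg/cg) * R ^ (-(α - β)))) :=
        mul_le_mul (hlamle x) hSig hSig0 (le_of_lt hCV)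
      have hretx := hret x
      linarith [h1]
    have hsum : (N:ℝ) * (1/(2*Cg)) ≤ ∑ x ∈ F, eqMeasure p lam (↑F) x := by
      have h5 := Finset.card_nsmul_le_sum F _ _ hper
      rw [hFcard] at h5
      calc (N:ℝ) * (1/(2*Cg)) = (N • (1/(2*Cg)) : ℝ) := (nsmul_eq_mul _ _).symm
        _ ≤ _ := h5
    refine le_trans ?_ hsum
    have hM : M ≤ (N:ℝ)/(2*Cg) := by
      rw [le_div_iff₀ (by positivity)]
      linarith
    calc M ≤ (N:ℝ)/(2*Cg) := hM
      _ = (N:ℝ) * (1/(2*Cg)) := by ring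
  -- comparing capaE with the finite sum
  have ofReal_sum_le : ∀ (s : Finset V) (f : V → ℝ),
      ENNReal.ofReal (∑ x ∈ s, f x) ≤ ∑ x ∈ s, ENNReal.ofReal (f x) := by
    intro s f
    induction s using Finset.induction with
    | empty => simp
    | insert _ _ h ih =>
      rw [Finset.sum_insert h, Finset.sum_insert h]
      exact le_trans ENNReal.ofReal_add_le (add_le_add_right ih _)
  have capaE_ge : ∀ (K : Finset V),
      ENNReal.ofReal (∑ x ∈ K, eqMeasure p lam (↑K) x) ≤ capaE p lam (↑K) := by
    intro K
    have h1 : capaE p lam (↑K) = ∑ x ∈ K, ENNReal.ofReal (eqMeasure p lam (↑K) x) := by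
      rw [capaE, tsum_eq_sum (s := K) ?_]
      · exact Finset.sum_congr rfl fun x hx => Set.indicator_of_mem (Finset.mem_coe.2 hx) _
      · intro x hx
        exact Set.indicator_of_notMem (fun h => hx (Finset.mem_coe.1 h)) _
    rw [h1]
    exact ofReal_sum_le K _
  have hABfin : ∀ L : ℝ, (A ∩ {v | d x₀ v ≤ L}).Finite := fun L =>
    (hBfin x₀ L).subset Set.inter_subset_right
  have hKLcoe : ∀ L, ↑((hABfin L).toFinset) = A ∩ {v | d x₀ v ≤ L} := fun L =>
    (hABfin L).coe_toFinset
  constructor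
  · refine ENNReal.tendsto_nhds_top fun n => ?_
    obtain ⟨F, hFA, hFcap⟩ := LB ((n:ℝ)+1)
    have hL0 : ∀ x ∈ F, d x₀ x ≤ ∑ z ∈ F, d x₀ z := fun x hx =>
      Finset.single_le_sum (fun z _ => hd_nonneg x₀ z) hx
    rw [Filter.eventually_atTop]
    refine ⟨∑ z ∈ F, d x₀ z, fun L hL => ?_⟩
    have hFsub : F ⊆ (hABfin L).toFinset := by
      intro x hx
      rw [Set.Finite.mem_toFinset]
      exact ⟨hFA (Finset.mem_coe.2 hx), le_trans (hL0 x hx) hL⟩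
    have h2 : ((n:ℝ)+1) ≤ ∑ x ∈ (hABfin L).toFinset,
        eqMeasure p lam (↑((hABfin L).toFinset)) x :=
      le_trans hFcap (capR_mono F _ hFsub)
    have h3 : ENNReal.ofReal ((n:ℝ)+1) ≤ capaE p lam (↑((hABfin L).toFinset)) :=
      le_trans (ENNReal.ofReal_le_ofReal h2) (capaE_ge _)
    rw [hKLcoe L] at h3
    refine lt_of_lt_of_le ?_ h3
    rw [ENNReal.ofReal_add (Nat.cast_nonneg n) zero_le_one, ENNReal.ofReal_natCast,
      ENNReal.ofReal_one]
    exact ENNReal.lt_add_right (ENNReal.natCast_ne_top n) one_ne_zero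
  · have hE : MeasurableSet {ω | I ω ∩ A = ∅} := hImeas A
    have hbound : ∀ M : ℝ, μ {ω | I ω ∩ A = ∅} ≤ ENNReal.ofReal (Real.exp (-(u * M))) := by
      intro M
      obtain ⟨F, hFA, hFcap⟩ := LB M
      set L : ℝ := ∑ z ∈ F, d x₀ z with hLdef
      have hFsub : F ⊆ (hABfin L).toFinset := by
        intro x hx
        rw [Set.Finite.mem_toFinset]
        refine ⟨hFA (Finset.mem_coe.2 hx), ?_⟩
        exact Finset.single_le_sum (fun z _ => hd_nonneg x₀ z) hx
      have hsub : {ω | I ω ∩ A = ∅} ⊆ {ω | I ω ∩ (↑((hABfin L).toFinset) : Set V) = ∅} := by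
        intro ω hω
        simp only [Set.mem_setOf_eq] at hω ⊢
        rw [hKLcoe L]
        have h1 : I ω ∩ (A ∩ {v | d x₀ v ≤ L}) ⊆ I ω ∩ A :=
          Set.inter_subset_inter_right _ Set.inter_subset_left
        rw [hω] at h1
        exact Set.subset_empty_iff.1 h1
      calc μ {ω | I ω ∩ A = ∅} ≤ μ {ω | I ω ∩ (↑((hABfin L).toFinset) : Set V) = ∅} :=
            MeasureTheory.measure_mono hsub
        _ = ENNReal.ofReal (Real.exp (-(u * ∑ x ∈ (hABfin L).toFinset,
              eqMeasure p lam (↑((hABfin L).toFinset)) x))) := hIlaw _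
        _ ≤ ENNReal.ofReal (Real.exp (-(u * M))) := by
            refine ENNReal.ofReal_le_ofReal (Real.exp_le_exp.2 ?_)
            have h2 : M ≤ ∑ x ∈ (hABfin L).toFinset,
                eqMeasure p lam (↑((hABfin L).toFinset)) x :=
              le_trans hFcap (capR_mono F _ hFsub)
            have := mul_le_mul_of_nonneg_left h2 (le_of_lt hu)
            linarith
    have hE0 : μ {ω | I ω ∩ A = ∅} = 0 := by
      by_contra hne
      have hfin : μ {ω | I ω ∩ A = ∅} ≠ ⊤ := MeasureTheory.measure_ne_top μ _
      have htr : 0 < (μ {ω | I ω ∩ A = ∅}).toReal := ENNReal.toReal_pos hne hfin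
      have htend : Filter.Tendsto (fun M : ℝ => Real.exp (-(u * M))) Filter.atTop (nhds 0) := by
        refine Real.tendsto_exp_atBot.comp ?_
        have h1 : Filter.Tendsto (fun M : ℝ => u * M) Filter.atTop Filter.atTop :=
          Filter.Tendsto.const_mul_atTop hu Filter.tendsto_id
        exact Filter.tendsto_neg_atBot_iff.2 h1
      obtain ⟨M, hM⟩ := (htend.eventually_lt_const htr).exists
      have h2 : ENNReal.ofReal (Real.exp (-(u * M))) < μ {ω | I ω ∩ A = ∅} := by
        have h3 := (ENNReal.ofReal_lt_ofReal_iff htr).2 hM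
        rwa [ENNReal.ofReal_toReal hfin] at h3
      exact absurd (hbound M) (not_le.2 h2)
    have hcompl : {ω | (I ω ∩ A).Nonempty} = {ω | I ω ∩ A = ∅}ᶜ := by
      ext ω
      simp [Set.nonempty_iff_ne_empty]
    rw [hcompl, MeasureTheory.prob_compl_eq_one_sub hE, hE0, tsub_zero]
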